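/- arXiv:1110.4580 — 2 statements merged into one kernel-verified Lean document; each statement's English description precedes it below -/
import Mathlib

section
/- If H is a bounded self-adjoint operator on a Hilbert space and Π is an orthogonal projection with ‖[H, Π]‖ ≤ ε, then for all t ∈ ℝ, ‖(e^{itH} − e^{it ΠHΠ}) Π‖ ≤ ε |t| e^{|t| ‖H‖} (in particular the dynamics generated by H, restricted to Ran Π, is approximated by the dynamics of the compressed Hamiltonian ΠHΠ up to an error growing at most linearly-exponentially in time). -/
open Complex

noncomputable section

set_option maxHeartbeats 1000000 in
/-- if ‖[H, P]‖ ≤ ε for an orthogonal projection P, the dynamics of H on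
Ran P is approximated by that of the compressed Hamiltonian PHP. -/
theorem adiabatic_dynamics {𝓗 : Type*} [NormedAddCommGroup 𝓗] [InnerProductSpace ℂ 𝓗]
    [CompleteSpace 𝓗] (H P : 𝓗 →L[ℂ] 𝓗) (hH : IsSelfAdjoint H)
    (hPproj : P ∘L P = P) (hPsa : IsSelfAdjoint P)
    (ε : ℝ) (hcomm : ‖H ∘L P - P ∘L H‖ ≤ ε) :
    ∀ t : ℝ,
      ‖(NormedSpace.exp ((Complex.I * t) • H) -
          NormedSpace.exp ((Complex.I * t) • (P ∘L H ∘L P))) ∘L P‖ ≤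
        ε * |t| * Real.exp (|t| * ‖H‖) := by
  intro t
  have hε0 : (0:ℝ) ≤ ε := le_trans (norm_nonneg _) hcomm
  set A : 𝓗 →L[ℂ] 𝓗 := P ∘L H ∘L P with hA
  -- basic facts
  have hPmul : P * P = P := hPproj
  have hPnorm : ‖P‖ ≤ 1 := by
    have h1 : ‖P‖ * ‖P‖ = ‖P‖ := by
      have := CStarRing.norm_star_mul_self (x := P)
      rw [hPsa.star_eq, hPmul] at this
      exact this.symm
    nlinarith [norm_nonneg P]
  have hAm : A = P * H * P := (mul_assoc P H P)
  have hAnorm : ‖A‖ ≤ ‖H‖ := by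
    rw [hAm]
    calc ‖P * H * P‖ ≤ ‖P * H‖ * ‖P‖ := norm_mul_le _ _
    _ ≤ ‖P‖ * ‖H‖ * ‖P‖ := by
        have := norm_mul_le P H
        nlinarith [norm_nonneg P, norm_nonneg (P * H)]
    _ ≤ ‖H‖ := by
        have hp2 : ‖P‖ * ‖P‖ ≤ 1 := by nlinarith [norm_nonneg P]
        nlinarith [norm_nonneg H, norm_nonneg P]
  have hPA : P * A = A := by
    rw [hAm, ← mul_assoc, ← mul_assoc, hPmul]
  have hcomm' : ‖H * P - P * H‖ ≤ ε := hcomm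
  have key : ‖(H - A) * P‖ ≤ ε := by
    have hid : (H - A) * P = (H * P - P * H) * P := by
      rw [hAm, sub_mul, sub_mul, mul_assoc (P * H) P P, hPmul, mul_assoc H P P, hPmul]
    rw [hid]
    calc ‖(H * P - P * H) * P‖ ≤ ‖H * P - P * H‖ * ‖P‖ := norm_mul_le _ _
    _ ≤ ε := by nlinarith [norm_nonneg (H * P - P * H)]
  have hAnP : ∀ n : ℕ, P * (A ^ n * P) = A ^ n * P := by
    intro n
    induction n with
    | zero => simpa using hPmul
    | succ m ih =>
        rw [pow_succ', mul_assoc, ← mul_assoc P A (A ^ m * P), hPA, ← mul_assoc]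
  have keyn : ∀ n : ℕ, ‖(H - A) * (A ^ n * P)‖ ≤ ε * ‖H‖ ^ n := by
    intro n
    have h1 : (H - A) * (A ^ n * P) = ((H - A) * P) * (A ^ n * P) := by
      conv_lhs => rw [← hAnP n, ← mul_assoc]
    rw [h1]
    have h2 : ‖A ^ n * P‖ ≤ ‖H‖ ^ n := by
      match n with
      | 0 => simpa [one_mul] using hPnorm
      | (m+1) =>
        calc ‖A ^ (m+1) * P‖ ≤ ‖A ^ (m+1)‖ * ‖P‖ := norm_mul_le _ _
        _ ≤ ‖A‖ ^ (m+1) * 1 := by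
            have h4 : ‖A ^ (m+1)‖ ≤ ‖A‖ ^ (m+1) := norm_pow_le' A (Nat.succ_pos m)
            have h5 := norm_nonneg (A ^ (m+1))
            nlinarith [pow_nonneg (norm_nonneg A) (m+1)]
        _ ≤ ‖H‖ ^ (m+1) := by
            rw [mul_one]
            exact pow_le_pow_left₀ (norm_nonneg A) hAnorm (m+1)
    calc ‖(H - A) * P * (A ^ n * P)‖ ≤ ‖(H - A) * P‖ * ‖A ^ n * P‖ := norm_mul_le _ _
    _ ≤ ε * ‖H‖ ^ n := by
        have := norm_nonneg ((H - A) * P)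
        have := norm_nonneg (A ^ n * P)
        nlinarith [pow_nonneg (norm_nonneg H) n]
  -- main inductive bound
  have main : ∀ n : ℕ, ‖(H ^ (n+1) - A ^ (n+1)) * P‖ ≤ (n+1) * ε * ‖H‖ ^ n := by
    intro n
    induction n with
    | zero => simpa using key
    | succ m ih =>
        have hsplit : (H ^ (m+2) - A ^ (m+2)) * P
            = H * ((H ^ (m+1) - A ^ (m+1)) * P) + (H - A) * (A ^ (m+1) * P) := by
          have : H ^ (m+2) = H * H ^ (m+1) := (pow_succ' H (m+1))
          have : A ^ (m+2) = A * A ^ (m+1) := (pow_succ' A (m+1))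
          rw [pow_succ' H (m+1), pow_succ' A (m+1)]
          noncomm_ring
        rw [hsplit]
        calc ‖H * ((H ^ (m+1) - A ^ (m+1)) * P) + (H - A) * (A ^ (m+1) * P)‖
            ≤ ‖H * ((H ^ (m+1) - A ^ (m+1)) * P)‖ + ‖(H - A) * (A ^ (m+1) * P)‖ :=
              norm_add_le _ _
        _ ≤ ‖H‖ * ((m+1) * ε * ‖H‖ ^ m) + ε * ‖H‖ ^ (m+1) := by
            gcongr
            · calc ‖H * ((H ^ (m+1) - A ^ (m+1)) * P)‖
                  ≤ ‖H‖ * ‖(H ^ (m+1) - A ^ (m+1)) * P‖ := norm_mul_le _ _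
              _ ≤ ‖H‖ * ((m+1) * ε * ‖H‖ ^ m) := by
                  exact mul_le_mul_of_nonneg_left ih (norm_nonneg H)
            · exact keyn (m+1)
        _ = ((m+1 : ℕ) + 1) * ε * ‖H‖ ^ (m+1) := by push_cast; ring
  -- the series
  set u : ℂ := Complex.I * t with hu
  have hunorm : ‖u‖ = |t| := by
    rw [hu, norm_mul, Complex.norm_I, one_mul, Complex.norm_real, Real.norm_eq_abs]
  set φ : (𝓗 →L[ℂ] 𝓗) →L[ℂ] (𝓗 →L[ℂ] 𝓗) :=
    (ContinuousLinearMap.compL ℂ 𝓗 𝓗 𝓗).flip P with hφ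
  have hφap : ∀ T : 𝓗 →L[ℂ] 𝓗, φ T = T ∘L P := fun T => rfl
  have hsH : HasSum (fun n : ℕ => (((Nat.factorial n : ℂ))⁻¹ • (u • H) ^ n) ∘L P)
      (NormedSpace.exp (u • H) ∘L P) := by
    have := (NormedSpace.exp_series_hasSum_exp' (𝕂 := ℂ) (u • H)).mapL φ
    simpa [hφap] using this
  have hsA : HasSum (fun n : ℕ => (((Nat.factorial n : ℂ))⁻¹ • (u • A) ^ n) ∘L P)
      (NormedSpace.exp (u • A) ∘L P) := by
    have := (NormedSpace.exp_series_hasSum_exp' (𝕂 := ℂ) (u • A)).mapL φ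
    simpa [hφap] using this
  have hsum : HasSum (fun n : ℕ => (((Nat.factorial n : ℂ))⁻¹ * u ^ n) • ((H ^ n - A ^ n) * P))
      (NormedSpace.exp (u • H) ∘L P - NormedSpace.exp (u • A) ∘L P) := by
    have := hsH.sub hsA
    convert this using 2 with n
    · rfl
    simp only [smul_pow, ContinuousLinearMap.smul_comp, smul_smul, sub_mul, smul_sub,
      ContinuousLinearMap.mul_def]
  -- nonneg bound G
  set c : ℝ := |t| * ‖H‖ with hc
  have hG : HasSum (fun n : ℕ => ε * |t| * (c ^ n / Nat.factorial n)) (ε * |t| * Real.exp c) := by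
    have := (NormedSpace.expSeries_div_hasSum_exp (𝔸 := ℝ) c).mul_left (ε * |t|)
    rwa [Real.exp_eq_exp_ℝ]
  set G : ℕ → ℝ := fun n => Nat.rec 0 (fun m _ => ε * |t| * (c ^ m / Nat.factorial m)) n with hGdef
  have hGsum : HasSum G (ε * |t| * Real.exp c) := by
    rw [← hasSum_nat_add_iff' 1]
    have h0 : G 0 = 0 := rfl
    simp only [Finset.range_one, Finset.sum_singleton, h0, sub_zero]
    exact hG
  have hbound : ∀ n : ℕ, ‖(((Nat.factorial n : ℂ))⁻¹ * u ^ n) • ((H ^ n - A ^ n) * P)‖ ≤ G n := by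
    intro n
    match n with
    | 0 => simp [G]
    | (m+1) =>
        have h1 : ‖(((Nat.factorial (m+1) : ℂ))⁻¹ * u ^ (m+1))‖ = ((Nat.factorial (m+1) : ℝ))⁻¹ * |t| ^ (m+1) := by
          rw [norm_mul, norm_inv, norm_pow, hunorm]
          norm_num
        rw [norm_smul, h1]
        have h2 := main m
        have h3 : G (m+1) = ε * |t| * (c ^ m / Nat.factorial m) := rfl
        rw [h3, hc]
        have hfact : ((Nat.factorial (m+1) : ℝ)) = (m+1) * (Nat.factorial m) := by
          push_cast [Nat.factorial_succ]; ring
        have hmfac : (0:ℝ) < (Nat.factorial m : ℝ) := by positivity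
        have hm1fac : (0:ℝ) < ((Nat.factorial (m+1)) : ℝ) := by positivity
        calc ((Nat.factorial (m+1) : ℝ))⁻¹ * |t| ^ (m+1) * ‖(H ^ (m+1) - A ^ (m+1)) * P‖
            ≤ ((Nat.factorial (m+1) : ℝ))⁻¹ * |t| ^ (m+1) * ((m+1) * ε * ‖H‖ ^ m) := by
              have : (0:ℝ) ≤ ((Nat.factorial (m+1) : ℝ))⁻¹ * |t| ^ (m+1) := by positivity
              exact mul_le_mul_of_nonneg_left h2 this
        _ = ε * |t| * ((|t| * ‖H‖) ^ m / (Nat.factorial m)) := by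
              rw [mul_pow, hfact]
              field_simp [hfact]
              ring
  have hnormle : ‖NormedSpace.exp (u • H) ∘L P - NormedSpace.exp (u • A) ∘L P‖
      ≤ ε * |t| * Real.exp c := by
    exact hsum.norm_le_of_bounded hGsum hbound
  have hfinal : (NormedSpace.exp (u • H) - NormedSpace.exp (u • A)) ∘L P
      = NormedSpace.exp (u • H) ∘L P - NormedSpace.exp (u • A) ∘L P :=
    ContinuousLinearMap.sub_comp _ _ _
  rw [← hu, ← hA] at *
  rw [hfinal]
  exact hnormle
end
end

section
/- If H and H' are bounded self-adjoint operators on Hilbert spaces 𝓗 and 𝓗' and U : 𝓗 → 𝓗' is unitary with ‖U H U* − H'‖ ≤ ε, then the Hausdorff distance between Spec(H) and Spec(H') is at most ε. -/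
noncomputable section

/-- Conjugation by a continuous linear equivalence as an algebra equivalence of
the algebras of continuous linear endomorphisms. -/
def conjAlgEquiv {E F : Type*} [NormedAddCommGroup E] [NormedSpace ℂ E]
    [NormedAddCommGroup F] [NormedSpace ℂ F] (e : E ≃L[ℂ] F) :
    (E →L[ℂ] E) ≃ₐ[ℂ] (F →L[ℂ] F) where
  toFun T := (e : E →L[ℂ] F) ∘L T ∘L (e.symm : F →L[ℂ] E)
  invFun T := (e.symm : F →L[ℂ] E) ∘L T ∘L (e : E →L[ℂ] F)
  left_inv T := by ext x; simp
  right_inv T := by ext x; simp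
  map_mul' T S := by ext x; simp
  map_add' T S := by ext x; simp
  commutes' z := by ext x; simp

/-- If `b` is self-adjoint and `‖a - b‖ ≤ ε`, every spectral point of `a` is within `ε`
of the spectrum of `b`. -/
lemma infDist_spectrum_le_of_norm_sub_le {A : Type*} [CStarAlgebra A] {a b : A}
    (hb : IsSelfAdjoint b) {ε : ℝ} (hab : ‖a - b‖ ≤ ε) {z : ℂ} (hz : z ∈ spectrum ℂ a) :
    Metric.infDist z (spectrum ℂ b) ≤ ε := by
  by_contra hcon
  push_neg at hcon
  set d := Metric.infDist z (spectrum ℂ b) with hd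
  have hε0 : 0 ≤ ε := le_trans (norm_nonneg _) hab
  have hd0 : 0 < d := lt_of_le_of_lt hε0 hcon
  have hbn : IsStarNormal b := hb.isStarNormal
  have hdist : ∀ x ∈ spectrum ℂ b, d ≤ ‖z - x‖ := fun x hx => by
    simpa [Complex.dist_eq] using Metric.infDist_le_dist_of_mem hx
  have hne : ∀ x ∈ spectrum ℂ b, z - x ≠ 0 := fun x hx h0 => by
    have := hdist x hx
    rw [h0, norm_zero] at this
    exact absurd this (not_le.mpr hd0)
  set f : ℂ → ℂ := fun x => (z - x)⁻¹ with hf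
  have hfc : ContinuousOn f (spectrum ℂ b) :=
    ContinuousOn.inv₀ (by fun_prop) hne
  set r := cfc f b with hr
  have hgc : ContinuousOn (fun x : ℂ => z - x) (spectrum ℂ b) := by fun_prop
  have hg : algebraMap ℂ A z - b = cfc (fun x : ℂ => z - x) b := by
    rw [cfc_sub _ _ b (by fun_prop) (by fun_prop), cfc_const z b, cfc_id' ℂ b]
  have hone : cfc (fun _ : ℂ => (1:ℂ)) b = 1 := by rw [cfc_const (1:ℂ) b, map_one]
  have hmul : r * (algebraMap ℂ A z - b) = 1 := by
    rw [hg, hr, ← cfc_mul f _ b hfc hgc]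
    rw [cfc_congr (g := fun _ => (1 : ℂ)) fun x hx => by
      simp [hf, inv_mul_cancel₀ (hne x hx)]]
    exact hone
  have hmul' : (algebraMap ℂ A z - b) * r = 1 := by
    rw [hg, hr, ← cfc_mul _ f b hgc hfc]
    rw [cfc_congr (g := fun _ => (1 : ℂ)) fun x hx => by
      simp [hf, mul_inv_cancel₀ (hne x hx)]]
    exact hone
  have hrnorm : ‖r‖ ≤ d⁻¹ := by
    refine norm_cfc_le (by positivity) fun x hx => ?_
    rw [norm_inv]
    exact inv_anti₀ hd0 (hdist x hx)
  have hsmall : ‖r * (a - b)‖ < 1 := by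
    calc ‖r * (a - b)‖ ≤ ‖r‖ * ‖a - b‖ := norm_mul_le _ _
      _ ≤ d⁻¹ * ε := mul_le_mul hrnorm hab (norm_nonneg _) (by positivity)
      _ < d⁻¹ * d := by
          exact mul_lt_mul_of_pos_left hcon (by positivity)
      _ = 1 := inv_mul_cancel₀ hd0.ne'
  have key : algebraMap ℂ A z - a = (algebraMap ℂ A z - b) * (1 - r * (a - b)) := by
    rw [mul_sub, mul_one, ← mul_assoc, hmul', one_mul]
    abel
  have hu1 : IsUnit (algebraMap ℂ A z - b) := ⟨⟨_, r, hmul', hmul⟩, rfl⟩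
  have hu2 : IsUnit (1 - r * (a - b)) := by
    simpa using (Units.oneSub _ hsmall).isUnit
  exact (spectrum.mem_iff.mp hz) (key ▸ hu1.mul hu2)

/-- approximate unitary equivalence implies the spectra are close in
Hausdorff distance. -/
theorem hausdorff_spectrum_estimate {𝓗 𝓗' : Type*}
    [NormedAddCommGroup 𝓗] [InnerProductSpace ℂ 𝓗] [CompleteSpace 𝓗]
    [NormedAddCommGroup 𝓗'] [InnerProductSpace ℂ 𝓗'] [CompleteSpace 𝓗']
    (H : 𝓗 →L[ℂ] 𝓗) (H' : 𝓗' →L[ℂ] 𝓗') (hH : IsSelfAdjoint H) (hH' : IsSelfAdjoint H')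
    (U : 𝓗 ≃ₗᵢ[ℂ] 𝓗') (ε : ℝ)
    (hclose : ‖(U.toContinuousLinearEquiv : 𝓗 →L[ℂ] 𝓗') ∘L H ∘L
        (U.symm.toContinuousLinearEquiv : 𝓗' →L[ℂ] 𝓗) - H'‖ ≤ ε) :
    Metric.hausdorffDist (spectrum ℂ H) (spectrum ℂ H') ≤ ε := by
  set K : 𝓗' →L[ℂ] 𝓗' := (U.toContinuousLinearEquiv : 𝓗 →L[ℂ] 𝓗') ∘L H ∘L
      (U.symm.toContinuousLinearEquiv : 𝓗' →L[ℂ] 𝓗) with hKdef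
  have hε0 : 0 ≤ ε := le_trans (norm_nonneg _) hclose
  have hcoe : (U.toContinuousLinearEquiv : 𝓗 →L[ℂ] 𝓗') = (U : 𝓗 →L[ℂ] 𝓗') := by
    ext x; simp
  have hcoe' : (U.symm.toContinuousLinearEquiv : 𝓗' →L[ℂ] 𝓗) = (U.symm : 𝓗' →L[ℂ] 𝓗) := by
    ext x; simp
  have hKeq : K = conjAlgEquiv U.toContinuousLinearEquiv H := by
    rw [hKdef, conjAlgEquiv]
    congr 1
  have hspec : spectrum ℂ K = spectrum ℂ H := by
    rw [hKeq]; exact AlgEquiv.spectrum_eq (conjAlgEquiv U.toContinuousLinearEquiv) H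
  have hK : IsSelfAdjoint K := by
    rw [hKdef, hcoe, hcoe', IsSelfAdjoint, ContinuousLinearMap.star_eq_adjoint,
      ContinuousLinearMap.adjoint_comp, ContinuousLinearMap.adjoint_comp,
      U.adjoint_eq_symm, U.symm.adjoint_eq_symm, hH.adjoint_eq, U.symm_symm]
    ext x; simp
  refine Metric.hausdorffDist_le_of_infDist hε0 (fun x hx => ?_) (fun x hx => ?_)
  · exact infDist_spectrum_le_of_norm_sub_le hH' hclose (hspec ▸ hx)
  · have h2 : ‖H' - K‖ ≤ ε := by rwa [norm_sub_rev] at hclose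
    have := infDist_spectrum_le_of_norm_sub_le hK h2 hx
    rwa [hspec] at this
end
end
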